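/- Let K ⊆ {2,3,...}, α = gcd{k-1 : k ∈ K} and β = gcd{k(k-1) : k ∈ K}. Then α divides β, and moreover gcd(α, β/α) = 1. -/

import Mathlib

/-- For a nonempty set K of integers ≥ 2, with
α = gcd{k-1 : k ∈ K} and β = gcd{k(k-1) : k ∈ K}, α divides β and
gcd(α, β/α) = 1. -/
theorem alpha_dvd_beta_and_coprime
    (K : Finset ℕ) (hne : K.Nonempty) (hK : ∀ k ∈ K, 2 ≤ k) :
    K.gcd (fun k => k - 1) ∣ K.gcd (fun k => k * (k - 1)) ∧
    Nat.Coprime (K.gcd (fun k => k - 1))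
      (K.gcd (fun k => k * (k - 1)) / K.gcd (fun k => k - 1)) := by
  set α := K.gcd (fun k => k - 1) with hα
  set β := K.gcd (fun k => k * (k - 1)) with hβ
  have hαβ : α ∣ β := by
    apply Finset.dvd_gcd
    intro k hk
    exact (Finset.gcd_dvd hk).trans (dvd_mul_left _ _)
  obtain ⟨k0, hk0⟩ := hne
  have hαpos : 0 < α := by
    rcases Nat.eq_zero_or_pos α with h | h
    · exfalso
      have hz := Finset.gcd_eq_zero_iff.mp (hα.symm.trans h) k0 hk0
      have h2 := hK k0 hk0
      omega
    · exact h
  refine ⟨hαβ, ?_⟩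
  set d := Nat.gcd α (β / α) with hd
  have hαd : α * d ∣ β := by
    obtain ⟨c, hc⟩ := hαβ
    have : d ∣ c := by
      have : β / α = c := by rw [hc, Nat.mul_div_cancel_left _ hαpos]
      exact this ▸ Nat.gcd_dvd_right _ _
    exact hc ▸ mul_dvd_mul_left α this
  have hkey : α * d ∣ α := by
    apply Finset.dvd_gcd
    intro k hk
    have h2 := hK k hk
    have hdvdk : α * d ∣ k * (k - 1) := hαd.trans (Finset.gcd_dvd hk)
    have hcop : Nat.Coprime (α * d) k := by
      have hk1 : α ∣ k - 1 := Finset.gcd_dvd hk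
      have hd1 : d ∣ k - 1 := (Nat.gcd_dvd_left _ _).trans hk1
      have hck : Nat.Coprime (k - 1) k := by
        have h1 : k - 1 + 1 = k := by omega
        rw [← h1]
        exact Nat.coprime_self_add_right.mpr (Nat.coprime_one_right _)
      exact Nat.Coprime.mul (hck.coprime_dvd_left hk1) (hck.coprime_dvd_left hd1)
    exact hcop.dvd_of_dvd_mul_left hdvdk
  have : d ∣ 1 := by
    have h1 : α * d ∣ α * 1 := by simpa using hkey
    exact (Nat.mul_dvd_mul_iff_left hαpos).mp h1
  exact Nat.dvd_one.mp this
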